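/- Let 𝒜 be a nonempty finite alphabet and let ω be a Toeplitz sequence over 𝒜 with EP(ω) = {2^k : k ≥ 1}. Then there exist a countable set Ω₁ ⊆ Z(ω,σ) and a continuous surjection f : Z(ω,σ) → ℤ₂ such that: (1) f(σx) = f(x) + 1 for every x ∈ Z(ω,σ); (2) the complement Z(ω,σ) \ Ω₁ is invariant under σ; and (3) the restriction of f to Z(ω,σ) \ Ω₁ is injective. In particular, the subshift σ|_{Z(ω,σ)} is, up to a countable set, continuously conjugated to the binary odometer. -/

import Mathlib

/-- The one-sided shift on sequences.  Sequences are 0-indexed here: index `n`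
stands for position `n+1` of the paper's sequences `{1,2,3,…} → 𝒜`. -/
def shift {𝒜 : Type*} (x : ℕ → 𝒜) : ℕ → 𝒜 := fun n => x (n + 1)

/-- `Z(ω,σ)`: the closure of the forward shift-orbit of `ω`. -/
def orbitClosure {𝒜 : Type*} [TopologicalSpace 𝒜] (ω : ℕ → 𝒜) : Set (ℕ → 𝒜) :=
  closure {y | ∃ n : ℕ, shift^[n] ω = y}

/-- A sequence is Toeplitz if every position is periodically repeated. -/
def IsToeplitz {𝒜 : Type*} (x : ℕ → 𝒜) : Prop :=
  ∀ n : ℕ, ∃ p : ℕ, 0 < p ∧ ∀ k : ℕ, 0 < k → x (n + k * p) = x n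

/-- `p ≥ 1` is an essential partial period of `x` if there is a position `m` with
`x(m+kp) = x(m)` for all `k ≥ 1`, while for every `1 ≤ p' < p` some `k ≥ 1` has
`x(m+kp') ≠ x(m)`. -/
def EP {𝒜 : Type*} (x : ℕ → 𝒜) : Set ℕ :=
  {p | 0 < p ∧ ∃ m : ℕ, (∀ k : ℕ, 0 < k → x (m + k * p) = x m) ∧
    ∀ p' : ℕ, 0 < p' → p' < p → ∃ k : ℕ, 0 < k ∧ x (m + k * p') ≠ x m}

namespace Stmt8Aux

variable {𝒜 : Type*}

/-- position `n` has period `2^K` in `ω` -/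
def PerAt (ω : ℕ → 𝒜) (K n : ℕ) : Prop := ∀ k, 0 < k → ω (n + k * 2 ^ K) = ω n

open Classical in
noncomputable def minPer (ω : ℕ → 𝒜) (n : ℕ) : ℕ :=
  if h : ∃ p, 0 < p ∧ ∀ k, 0 < k → ω (n + k * p) = ω n then Nat.find h else 0

section Core

variable {ω : ℕ → 𝒜} (hT : IsToeplitz ω)
  (hEP : EP ω = {p : ℕ | ∃ k : ℕ, 1 ≤ k ∧ p = 2 ^ k})

include hT

open Classical in
lemma minPer_spec (n : ℕ) :
    0 < minPer ω n ∧ ∀ k, 0 < k → ω (n + k * minPer ω n) = ω n := by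
  have h := hT n
  rw [minPer, dif_pos h]
  exact Nat.find_spec h

open Classical in
lemma minPer_min {n p : ℕ} (hp : 0 < p) (hper : ∀ k, 0 < k → ω (n + k * p) = ω n) :
    minPer ω n ≤ p := by
  rw [minPer, dif_pos (hT n)]
  exact Nat.find_min' _ ⟨hp, hper⟩

lemma minPer_mem_EP (n : ℕ) : minPer ω n ∈ EP ω := by
  obtain ⟨hpos, hper⟩ := minPer_spec hT n
  refine ⟨hpos, n, hper, fun p' hp' hlt => ?_⟩
  by_contra h
  push_neg at h
  have : ∀ k, 0 < k → ω (n + k * p') = ω n := fun k hk => h k hk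
  exact absurd (minPer_min hT hp' this) (by omega)

include hEP

lemma minPer_pow (n : ℕ) : ∃ j, 1 ≤ j ∧ minPer ω n = 2 ^ j := by
  have h := minPer_mem_EP hT n
  rw [hEP] at h
  exact h

lemma perAt_iff (K n : ℕ) : PerAt ω K n ↔ minPer ω n ≤ 2 ^ K := by
  constructor
  · intro h
    exact minPer_min hT (p := 2 ^ K) (by positivity) h
  · intro h
    obtain ⟨j, hj1, hje⟩ := minPer_pow hT hEP n
    rw [hje] at h
    have hjK : j ≤ K := (Nat.pow_le_pow_iff_right (by norm_num)).mp h
    intro k hk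
    have harg : k * 2 ^ K = (k * 2 ^ (K - j)) * 2 ^ j := by
      rw [mul_assoc, ← pow_add]
      congr 2
      omega
    rw [harg]
    have := (minPer_spec hT n).2 (k * 2 ^ (K - j)) (by positivity)
    rwa [hje] at this

lemma perAt_mono {K K' : ℕ} (hKK : K ≤ K') {n : ℕ} (h : PerAt ω K n) : PerAt ω K' n := by
  rw [perAt_iff hT hEP] at h ⊢
  exact h.trans (Nat.pow_le_pow_right (by norm_num) hKK)

omit hT hEP in
lemma perAt_up {K n : ℕ} (h : PerAt ω K n) :
    PerAt ω K (n + 2 ^ K) ∧ ω (n + 2 ^ K) = ω n := by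
  have hval : ω (n + 2 ^ K) = ω n := by
    have := h 1 one_pos; simpa using this
  refine ⟨fun k hk => ?_, hval⟩
  have : n + 2 ^ K + k * 2 ^ K = n + (k + 1) * 2 ^ K := by ring
  rw [this, h (k + 1) (by omega), hval]

lemma perAt_down {K n : ℕ} (h : PerAt ω K (n + 2 ^ K)) :
    PerAt ω K n ∧ ω n = ω (n + 2 ^ K) := by
  have hval : ω n = ω (n + 2 ^ K) := by
    obtain ⟨j, hj1, hje⟩ := minPer_pow hT hEP n
    by_cases hjK : j ≤ K
    · have := (minPer_spec hT n).2 (2 ^ (K - j)) (by positivity)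
      rw [hje, ← pow_add] at this
      have hKj : K - j + j = K := by omega
      rw [hKj] at this
      exact this.symm
    · -- j > K
      have h1 := (minPer_spec hT n).2 1 one_pos
      rw [hje, one_mul] at h1
      -- ω (n + 2^j) = ω n ; also n + 2^j = n + 2^K + (2^(j-K) - 1) * 2^K
      have harg : n + 2 ^ j = n + 2 ^ K + (2 ^ (j - K) - 1) * 2 ^ K := by
        have h2 : 2 ^ j = 2 ^ (j - K) * 2 ^ K := by
          rw [← pow_add]; congr 1; omega
        have h3 : 1 ≤ 2 ^ (j - K) := Nat.one_le_two_pow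
        rw [h2, Nat.sub_mul, one_mul]
        have h4 : 2 ^ K ≤ 2 ^ (j - K) * 2 ^ K := Nat.le_mul_of_pos_left _ (by positivity)
        omega
      have h5 : 0 < 2 ^ (j - K) - 1 := by
        have : (2:ℕ) ≤ 2 ^ (j - K) := by
          have : 1 ≤ j - K := by omega
          calc (2:ℕ) = 2 ^ 1 := rfl
          _ ≤ 2 ^ (j - K) := Nat.pow_le_pow_right (by norm_num) this
        omega
      have := h (2 ^ (j - K) - 1) h5
      rw [← harg] at this
      rw [← h1, this]
  refine ⟨fun k hk => ?_, hval⟩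
  by_cases h1 : k = 1
  · subst h1; rw [one_mul]; exact hval.symm
  · have h2 : 2 ≤ k := by omega
    have harg : n + k * 2 ^ K = n + 2 ^ K + (k - 1) * 2 ^ K := by
      rw [Nat.sub_mul, one_mul]
      have : 2 ^ K ≤ k * 2 ^ K := Nat.le_mul_of_pos_left _ (by omega)
      omega
    rw [harg, h (k - 1) (by omega), hval]

lemma perAt_mod (K : ℕ) : ∀ n, (PerAt ω K n ↔ PerAt ω K (n % 2 ^ K)) ∧
    (PerAt ω K n → ω n = ω (n % 2 ^ K)) := by
  intro n
  induction n using Nat.strong_induction_on with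
  | _ n ih =>
    by_cases h : n < 2 ^ K
    · rw [Nat.mod_eq_of_lt h]
      exact ⟨Iff.rfl, fun _ => rfl⟩
    · push_neg at h
      have hm : n = (n - 2 ^ K) + 2 ^ K := by omega
      have hmod : n % 2 ^ K = (n - 2 ^ K) % 2 ^ K := Nat.mod_eq_sub_mod h
      have hlt : n - 2 ^ K < n := by
        have : 0 < 2 ^ K := by positivity
        omega
      obtain ⟨ih1, ih2⟩ := ih _ hlt
      constructor
      · rw [hmod, ← ih1]
        constructor
        · intro hp
          rw [hm] at hp
          exact (perAt_down hT hEP hp).1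
        · intro hp
          rw [hm]
          exact (perAt_up hp).1
      · intro hp0
        have hp : PerAt ω K (n - 2 ^ K + 2 ^ K) := by rw [← hm]; exact hp0
        have hp' : PerAt ω K (n - 2 ^ K) := (perAt_down hT hEP hp).1
        have e2 : ω (n - 2 ^ K) = ω (n - 2 ^ K + 2 ^ K) := (perAt_down hT hEP hp).2
        rw [hmod, ← ih2 hp']
        conv_lhs => rw [hm]
        exact e2.symm

lemma perAt_mod_iff (K n : ℕ) : PerAt ω K n ↔ PerAt ω K (n % 2 ^ K) :=
  (perAt_mod hT hEP K n).1

lemma perAt_mod_val {K n : ℕ} (h : PerAt ω K n) : ω n = ω (n % 2 ^ K) :=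
  (perAt_mod hT hEP K n).2 h

open Classical in
noncomputable def DF (ω : ℕ → 𝒜) (K : ℕ) : Finset ℕ :=
  (Finset.range (2 ^ K)).filter (fun r => PerAt ω K r)

lemma exists_minPer_eq {k : ℕ} (hk : 1 ≤ k) : ∃ m, minPer ω m = 2 ^ k := by
  have h : (2 ^ k : ℕ) ∈ EP ω := by rw [hEP]; exact ⟨k, hk, rfl⟩
  obtain ⟨hpos, m, hper, hess⟩ := h
  refine ⟨m, le_antisymm (minPer_min hT hpos hper) ?_⟩
  by_contra h
  push_neg at h
  obtain ⟨k', hk', hneq⟩ := hess (minPer ω m) (minPer_spec hT m).1 h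
  exact hneq ((minPer_spec hT m).2 k' hk')

lemma exists_not_perAt (K : ℕ) : ∃ r, r < 2 ^ K ∧ ¬ PerAt ω K r := by
  obtain ⟨m, hm⟩ := exists_minPer_eq hT hEP (k := K + 1) (by omega)
  have hnp : ¬ PerAt ω K m := by
    rw [perAt_iff hT hEP, hm]
    push_neg
    exact Nat.pow_lt_pow_right (by norm_num) (by omega)
  refine ⟨m % 2 ^ K, Nat.mod_lt _ (by positivity), ?_⟩
  rw [← perAt_mod_iff hT hEP]
  exact hnp

lemma card_DF_le (K : ℕ) : (DF ω K).card ≤ 2 ^ K - 1 := by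
  obtain ⟨r₀, hr₀lt, hr₀⟩ := exists_not_perAt hT hEP K
  have hsub : DF ω K ⊆ (Finset.range (2 ^ K)).erase r₀ := by
    intro r hr
    classical
    rw [DF, Finset.mem_filter] at hr
    exact Finset.mem_erase.mpr ⟨fun h => hr₀ (h ▸ hr.2), hr.1⟩
  calc (DF ω K).card ≤ _ := Finset.card_le_card hsub
  _ = 2 ^ K - 1 := by
    rw [Finset.card_erase_of_mem (Finset.mem_range.mpr hr₀lt), Finset.card_range]

lemma card_DF_succ (K : ℕ) : 2 * (DF ω K).card + 1 ≤ (DF ω (K + 1)).card := by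
  classical
  set A := DF ω K with hA
  set B := A.image (· + 2 ^ K) with hB
  obtain ⟨m, hm⟩ := exists_minPer_eq hT hEP (k := K + 1) (by omega)
  set ms := m % 2 ^ (K + 1) with hms
  have h2 : (2:ℕ) ^ (K + 1) = 2 ^ K + 2 ^ K := by rw [pow_succ]; ring
  have hmemA : ∀ r ∈ A, r < 2 ^ K ∧ PerAt ω K r := by
    intro r hr
    rw [hA, DF, Finset.mem_filter, Finset.mem_range] at hr
    exact hr
  have hAsub : A ⊆ DF ω (K + 1) := by
    intro r hr
    obtain ⟨hlt, hper⟩ := hmemA r hr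
    rw [DF, Finset.mem_filter, Finset.mem_range]
    exact ⟨by omega, perAt_mono hT hEP (by omega) hper⟩
  have hBsub : B ⊆ DF ω (K + 1) := by
    intro s hs
    rw [hB, Finset.mem_image] at hs
    obtain ⟨r, hr, rfl⟩ := hs
    obtain ⟨hlt, hper⟩ := hmemA r hr
    rw [DF, Finset.mem_filter, Finset.mem_range]
    constructor
    · omega
    · intro k hk
      have harg : r + 2 ^ K + k * 2 ^ (K + 1) = r + (1 + 2 * k) * 2 ^ K := by
        rw [pow_succ]; ring
      rw [harg, hper (1 + 2 * k) (by omega)]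
      have := hper 1 one_pos
      rw [one_mul] at this
      rw [this]
  -- ms ∈ DF (K+1)
  have hmsPer : PerAt ω (K + 1) ms := by
    rw [hms, ← perAt_mod_iff hT hEP, perAt_iff hT hEP, hm]
  have hmsmem : ms ∈ DF ω (K + 1) := by
    rw [DF, Finset.mem_filter, Finset.mem_range]
    exact ⟨Nat.mod_lt _ (by positivity), hmsPer⟩
  have hmKm : m % 2 ^ K = ms % 2 ^ K := by
    rw [hms, Nat.mod_mod_of_dvd _ (pow_dvd_pow 2 (by omega))]
  have hnotperm : ¬ PerAt ω K m := by
    rw [perAt_iff hT hEP, hm]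
    push_neg
    exact Nat.pow_lt_pow_right (by norm_num) (by omega)
  have hmsA : ms ∉ A := by
    intro hmem
    obtain ⟨hlt, hper⟩ := hmemA ms hmem
    have : PerAt ω K (ms % 2 ^ K) := (perAt_mod_iff hT hEP K ms).mp hper
    rw [← hmKm] at this
    exact hnotperm ((perAt_mod_iff hT hEP K m).mpr this)
  have hmsB : ms ∉ B := by
    intro hmem
    rw [hB, Finset.mem_image] at hmem
    obtain ⟨r, hr, hre⟩ := hmem
    obtain ⟨hlt, hper⟩ := hmemA r hr
    have hmsK : ms % 2 ^ K = r := by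
      rw [← hre, show r + 2 ^ K = r + 1 * 2 ^ K by ring, Nat.add_mul_mod_self_right,
        Nat.mod_eq_of_lt hlt]
    have : PerAt ω K (m % 2 ^ K) := by
      rw [hmKm, hmsK]; exact hper
    exact hnotperm ((perAt_mod_iff hT hEP K m).mpr this)
  have hABdisj : Disjoint A B := by
    rw [Finset.disjoint_left]
    intro r hr hrB
    obtain ⟨hlt, _⟩ := hmemA r hr
    rw [hB, Finset.mem_image] at hrB
    obtain ⟨r', hr', hre⟩ := hrB
    omega
  have hcardB : B.card = A.card := Finset.card_image_of_injective _ (add_left_injective _)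
  have hsub : insert ms (A ∪ B) ⊆ DF ω (K + 1) := by
    intro r hr
    rw [Finset.mem_insert, Finset.mem_union] at hr
    rcases hr with rfl | hr | hr
    · exact hmsmem
    · exact hAsub hr
    · exact hBsub hr
  have hcard : (insert ms (A ∪ B)).card = 2 * A.card + 1 := by
    rw [Finset.card_insert_of_notMem (by
      rw [Finset.mem_union]; push_neg; exact ⟨hmsA, hmsB⟩),
      Finset.card_union_of_disjoint hABdisj, hcardB]
    ring
  calc 2 * (DF ω K).card + 1 = (insert ms (A ∪ B)).card := hcard.symm
  _ ≤ (DF ω (K + 1)).card := Finset.card_le_card hsub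

lemma card_DF (K : ℕ) : (DF ω K).card = 2 ^ K - 1 := by
  induction K with
  | zero =>
    have := card_DF_le hT hEP 0
    simpa using this
  | succ K ih =>
    have h1 := card_DF_succ hT hEP K
    have h2 := card_DF_le hT hEP (K + 1)
    have h3 : (1:ℕ) ≤ 2 ^ K := Nat.one_le_two_pow
    have h4 : (2:ℕ) ^ (K + 1) = 2 * 2 ^ K := by rw [pow_succ]; ring
    omega

open Classical in
noncomputable def hole (ω : ℕ → 𝒜) (K : ℕ) : ℕ :=
  if h : ∃ r, r < 2 ^ K ∧ ¬ PerAt ω K r then h.choose else 0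

open Classical in
lemma hole_spec (K : ℕ) : hole ω K < 2 ^ K ∧ ¬ PerAt ω K (hole ω K) := by
  rw [hole, dif_pos (exists_not_perAt hT hEP K)]
  exact (exists_not_perAt hT hEP K).choose_spec

lemma not_perAt_iff (K n : ℕ) : ¬ PerAt ω K n ↔ n % 2 ^ K = hole ω K := by
  classical
  constructor
  · intro h
    have hr : ¬ PerAt ω K (n % 2 ^ K) := fun h' => h ((perAt_mod_iff hT hEP K n).mpr h')
    have hrlt : n % 2 ^ K < 2 ^ K := Nat.mod_lt _ (by positivity)
    -- both in range \ DF, which has card 1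
    have hsub : DF ω K ⊆ Finset.range (2 ^ K) := Finset.filter_subset _ _
    have hcard : ((Finset.range (2 ^ K)) \ DF ω K).card = 1 := by
      rw [Finset.card_sdiff_of_subset hsub, Finset.card_range, card_DF hT hEP]
      have : (1:ℕ) ≤ 2 ^ K := Nat.one_le_two_pow
      omega
    obtain ⟨a, ha⟩ := Finset.card_eq_one.mp hcard
    have hmem : ∀ r, r < 2 ^ K → ¬ PerAt ω K r → r = a := by
      intro r h1 h2
      have : r ∈ (Finset.range (2 ^ K)) \ DF ω K := by
        rw [Finset.mem_sdiff, Finset.mem_range, DF, Finset.mem_filter]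
        exact ⟨h1, fun hh => h2 hh.2⟩
      rw [ha, Finset.mem_singleton] at this
      exact this
    rw [hmem _ hrlt hr, ← hmem _ (hole_spec hT hEP K).1 (hole_spec hT hEP K).2]
  · intro h hper
    have := (perAt_mod_iff hT hEP K n).mp hper
    rw [h] at this
    exact (hole_spec hT hEP K).2 this

lemma perAt_of_ne_hole {K n : ℕ} (h : n % 2 ^ K ≠ hole ω K) : PerAt ω K n := by
  by_contra h'
  exact h ((not_perAt_iff hT hEP K n).mp h')

end Core

lemma shift_iterate (x : ℕ → 𝒜) (m n : ℕ) : shift^[m] x n = x (n + m) := by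
  induction m generalizing x with
  | zero => rfl
  | succ m ih =>
    rw [Function.iterate_succ_apply, ih (shift x)]
    show x (n + m + 1) = x (n + (m + 1))
    rfl

/-- window characterization of orbit-closure membership (topology-free form) -/
def InX (ω x : ℕ → 𝒜) : Prop := ∀ L, ∃ m, ∀ n < L, x n = ω (n + m)

lemma mem_closure_window [TopologicalSpace 𝒜] [DiscreteTopology 𝒜] {S : Set (ℕ → 𝒜)}
    {x : ℕ → 𝒜} : x ∈ closure S ↔ ∀ L : ℕ, ∃ y ∈ S, ∀ n < L, y n = x n := by
  constructor
  · intro hx L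
    have hU : IsOpen {y : ℕ → 𝒜 | ∀ n < L, y n = x n} := by
      have he : {y : ℕ → 𝒜 | ∀ n < L, y n = x n} = Set.pi (Set.Iio L) (fun n => {x n}) := by
        ext y
        simp [Set.mem_pi, Set.mem_Iio]
      rw [he]
      exact isOpen_set_pi (Set.finite_Iio L) (fun i _ => isOpen_discrete _)
    obtain ⟨y, hy1, hy2⟩ := mem_closure_iff.mp hx _ hU (fun n _ => rfl)
    exact ⟨y, hy2, hy1⟩
  · intro h
    rw [mem_closure_iff]
    intro U hU hxU
    obtain ⟨I, u, hu, hsub⟩ := isOpen_pi_iff.mp hU x hxU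
    obtain ⟨y, hyS, hy⟩ := h ((I.sup id) + 1)
    refine ⟨y, hsub fun i hi => ?_, hyS⟩
    rw [hy i (Nat.lt_succ_of_le (Finset.le_sup (f := id) (Finset.mem_coe.mp hi)))]
    exact (hu i (Finset.mem_coe.mp hi)).2

lemma mem_orbitClosure_iff [TopologicalSpace 𝒜] [DiscreteTopology 𝒜] {ω x : ℕ → 𝒜} :
    x ∈ orbitClosure ω ↔ InX ω x := by
  rw [orbitClosure, mem_closure_window]
  constructor
  · intro h L
    obtain ⟨y, ⟨m, hm⟩, hy⟩ := h L
    exact ⟨m, fun n hn => by rw [← hy n hn, ← hm, shift_iterate]⟩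
  · intro h L
    obtain ⟨m, hm⟩ := h L
    exact ⟨shift^[m] ω, ⟨m, rfl⟩, fun n hn => by rw [shift_iterate, ← hm n hn]⟩

lemma InX_shift {ω x : ℕ → 𝒜} (hx : InX ω x) : InX ω (shift x) := by
  intro L
  obtain ⟨m, hm⟩ := hx (L + 1)
  refine ⟨m + 1, fun n hn => ?_⟩
  show x (n + 1) = ω (n + (m + 1))
  rw [hm (n + 1) (by omega)]
  congr 1
  omega

lemma InX_orbit (ω : ℕ → 𝒜) (m : ℕ) : InX ω (shift^[m] ω) :=
  fun _ => ⟨m, fun n _ => shift_iterate ω m n⟩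

/-- `x` has phase `j (mod 2^K)`: arbitrarily long agreement with orbit points of
residue `j` -/
def HasPhase (ω x : ℕ → 𝒜) (K j : ℕ) : Prop :=
  ∀ L, ∃ m, m % 2 ^ K = j ∧ ∀ n < L, x n = ω (n + m)

lemma hasPhase_lt {ω x : ℕ → 𝒜} {K j : ℕ} (h : HasPhase ω x K j) : j < 2 ^ K := by
  obtain ⟨m, hm, -⟩ := h 0
  rw [← hm]
  exact Nat.mod_lt _ (by positivity)

lemma hasPhase_exists {ω x : ℕ → 𝒜} (hx : InX ω x) (K : ℕ) : ∃ j, HasPhase ω x K j := by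
  choose mf hmf using hx
  have key : ∃ j, ∀ L₀, ∃ L, L₀ ≤ L ∧ mf L % 2 ^ K = j := by
    by_contra h
    push_neg at h
    choose L₀ hL₀ using h
    set L := (Finset.range (2 ^ K)).sup L₀ with hL
    exact hL₀ (mf L % 2 ^ K) L
      (Finset.le_sup (Finset.mem_range.mpr (Nat.mod_lt _ (by positivity)))) rfl
  obtain ⟨j, hj⟩ := key
  refine ⟨j, fun L => ?_⟩
  obtain ⟨L', hL', he⟩ := hj L
  exact ⟨mf L', he, fun n hn => hmf L' n (by omega)⟩

section Core2

variable {ω : ℕ → 𝒜} (hT : IsToeplitz ω)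
  (hEP : EP ω = {p : ℕ | ∃ k : ℕ, 1 ≤ k ∧ p = 2 ^ k})

include hT hEP

lemma determined {x : ℕ → 𝒜} {K j : ℕ} (hj : HasPhase ω x K j) {n : ℕ}
    (h : (n + j) % 2 ^ K ≠ hole ω K) : x n = ω ((n + j) % 2 ^ K) := by
  obtain ⟨m, hm, hag⟩ := hj (n + 1)
  have hxn : x n = ω (n + m) := hag n (Nat.lt_succ_self n)
  have hjlt : j < 2 ^ K := hasPhase_lt hj
  have hmod : (n + m) % 2 ^ K = (n + j) % 2 ^ K := by
    have h1 : m ≡ j [MOD 2 ^ K] := by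
      unfold Nat.ModEq
      rw [hm, Nat.mod_eq_of_lt hjlt]
    exact Nat.ModEq.add_left n h1
  have hper : PerAt ω K (n + m) := perAt_of_ne_hole hT hEP (by rw [hmod]; exact h)
  rw [hxn, perAt_mod_val hT hEP hper, hmod]

lemma returns (L : ℕ) : ∃ M, ∀ n < L, ∀ k, ω (n + k * 2 ^ M) = ω n := by
  refine ⟨(Finset.range L).sup (minPer ω), fun n hn k => ?_⟩
  set M := (Finset.range L).sup (minPer ω) with hM
  have h1 : minPer ω n ≤ M := Finset.le_sup (Finset.mem_range.mpr hn)
  have h2 : minPer ω n ≤ 2 ^ M := h1.trans (Nat.lt_two_pow_self (n := M)).le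
  have hper : PerAt ω M n := (perAt_iff hT hEP M n).mpr h2
  rcases Nat.eq_zero_or_pos k with rfl | hk
  · simp
  · exact hper k hk

lemma omega_window {x : ℕ → 𝒜} (hx : InX ω x) (L : ℕ) : ∃ q, ∀ n < L, ω n = x (n + q) := by
  obtain ⟨M, hM⟩ := returns hT hEP L
  obtain ⟨m, hm⟩ := hx (L + 2 ^ M)
  have hpos : 0 < 2 ^ M := by positivity
  have hdm : m / 2 ^ M * 2 ^ M + m % 2 ^ M = m := Nat.div_add_mod' m (2 ^ M)
  have hmlt : m % 2 ^ M < 2 ^ M := Nat.mod_lt _ hpos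
  set T := (m / 2 ^ M + 1) * 2 ^ M with hT2
  have hT3 : T = m / 2 ^ M * 2 ^ M + 2 ^ M := by rw [hT2]; ring
  have hmT : m < T := by omega
  refine ⟨T - m, fun n hn => ?_⟩
  have h1 : x (n + (T - m)) = ω (n + (T - m) + m) := hm _ (by omega)
  have h2 : n + (T - m) + m = n + T := by omega
  rw [h1, h2, hT2]
  exact (hM n hn (m / 2 ^ M + 1)).symm

lemma return_phase {x : ℕ → 𝒜} (hx : InX ω x) (K : ℕ) :
    ∃ c, ∀ L, ∃ q, q % 2 ^ K = c ∧ ∀ n < L, ω n = x (n + q) := by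
  choose qf hqf using fun L => omega_window hT hEP hx L
  have key : ∃ c, ∀ L₀, ∃ L, L₀ ≤ L ∧ qf L % 2 ^ K = c := by
    by_contra h
    push_neg at h
    choose L₀ hL₀ using h
    set L := (Finset.range (2 ^ K)).sup L₀ with hL
    exact hL₀ (qf L % 2 ^ K) L
      (Finset.le_sup (Finset.mem_range.mpr (Nat.mod_lt _ (by positivity)))) rfl
  obtain ⟨c, hc⟩ := key
  refine ⟨c, fun L => ?_⟩
  obtain ⟨L', hL', hc'⟩ := hc L
  exact ⟨qf L', hc', fun n hn => hqf L' n (by omega)⟩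

lemma hasPhase_key {x : ℕ → 𝒜} {K j₀ : ℕ} (hj₀ : HasPhase ω x K j₀)
    {c : ℕ} (hret : ∀ L, ∃ q, q % 2 ^ K = c ∧ ∀ n < L, ω n = x (n + q)) :
    (hole ω K + j₀ + c) % 2 ^ K = hole ω K := by
  by_contra hne
  apply (hole_spec hT hEP K).2
  have main : ∀ k : ℕ, ω (hole ω K + k * 2 ^ K) = ω ((hole ω K + j₀ + c) % 2 ^ K) := by
    intro k
    obtain ⟨q, hq, hwin⟩ := hret (hole ω K + k * 2 ^ K + 1)
    have h1 : ω (hole ω K + k * 2 ^ K) = x (hole ω K + k * 2 ^ K + q) :=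
      hwin _ (Nat.lt_succ_self _)
    have hclt : c < 2 ^ K := hq ▸ Nat.mod_lt q (by positivity)
    have hmod : (hole ω K + k * 2 ^ K + q + j₀) % 2 ^ K = (hole ω K + j₀ + c) % 2 ^ K := by
      have e1 : hole ω K + k * 2 ^ K + q + j₀ ≡ hole ω K + 0 + c + j₀ [MOD 2 ^ K] := by
        refine (((Nat.ModEq.refl (hole ω K)).add ?_).add ?_).add (Nat.ModEq.refl j₀)
        · exact (Nat.modEq_zero_iff_dvd).mpr ⟨k, by ring⟩
        · show q % 2 ^ K = c % 2 ^ K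
          rw [hq, Nat.mod_eq_of_lt hclt]
      calc (hole ω K + k * 2 ^ K + q + j₀) % 2 ^ K
          = (hole ω K + 0 + c + j₀) % 2 ^ K := e1
        _ = (hole ω K + j₀ + c) % 2 ^ K := by congr 1; ring
    have h2 : x (hole ω K + k * 2 ^ K + q) = ω ((hole ω K + j₀ + c) % 2 ^ K) := by
      rw [← hmod]
      exact determined hT hEP hj₀ (by rw [hmod]; exact hne)
    rw [h1, h2]
  intro k hk
  have h0 := main 0
  simp only [Nat.zero_mul, Nat.add_zero] at h0
  rw [main k]
  exact h0.symm

lemma hasPhase_unique {x : ℕ → 𝒜} (hx : InX ω x) {K j j' : ℕ}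
    (hj : HasPhase ω x K j) (hj' : HasPhase ω x K j') : j = j' := by
  obtain ⟨c, hret⟩ := return_phase hT hEP hx K
  have h1 := hasPhase_key hT hEP hj hret
  have h2 := hasPhase_key hT hEP hj' hret
  have h3 : hole ω K + j + c ≡ hole ω K + j' + c [MOD 2 ^ K] := by
    show _ % _ = _ % _
    rw [h1, h2]
  have h4 : j ≡ j' [MOD 2 ^ K] :=
    Nat.ModEq.add_left_cancel' _ (Nat.ModEq.add_right_cancel' c h3)
  have h5 : j % 2 ^ K = j' % 2 ^ K := h4
  rwa [Nat.mod_eq_of_lt (hasPhase_lt hj), Nat.mod_eq_of_lt (hasPhase_lt hj')] at h5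

end Core2

open Classical in
noncomputable def phase (ω x : ℕ → 𝒜) (K : ℕ) : ℕ :=
  if h : ∃ j, HasPhase ω x K j then h.choose else 0

open Classical in
lemma phase_hasPhase {ω x : ℕ → 𝒜} (hx : InX ω x) (K : ℕ) :
    HasPhase ω x K (phase ω x K) := by
  rw [phase, dif_pos (hasPhase_exists hx K)]
  exact (hasPhase_exists hx K).choose_spec

lemma phase_lt {ω x : ℕ → 𝒜} (hx : InX ω x) (K : ℕ) : phase ω x K < 2 ^ K :=
  hasPhase_lt (phase_hasPhase hx K)

section Core3

variable {ω : ℕ → 𝒜} (hT : IsToeplitz ω)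
  (hEP : EP ω = {p : ℕ | ∃ k : ℕ, 1 ≤ k ∧ p = 2 ^ k})

include hT hEP

lemma phase_eq {x : ℕ → 𝒜} (hx : InX ω x) {K j : ℕ} (hj : HasPhase ω x K j) :
    phase ω x K = j :=
  hasPhase_unique hT hEP hx (phase_hasPhase hx K) hj

lemma phase_compat {x : ℕ → 𝒜} (hx : InX ω x) {K K' : ℕ} (hKK' : K ≤ K') :
    phase ω x K' % 2 ^ K = phase ω x K := by
  have hp := phase_hasPhase hx K'
  have hs : HasPhase ω x K (phase ω x K' % 2 ^ K) := by
    intro L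
    obtain ⟨m, hm, hag⟩ := hp L
    exact ⟨m, by rw [← hm, Nat.mod_mod_of_dvd _ (pow_dvd_pow 2 hKK')], hag⟩
  exact (phase_eq hT hEP hx hs).symm

lemma phase_shift {x : ℕ → 𝒜} (hx : InX ω x) (K : ℕ) :
    phase ω (shift x) K = (phase ω x K + 1) % 2 ^ K := by
  have hp := phase_hasPhase hx K
  have hs : HasPhase ω (shift x) K ((phase ω x K + 1) % 2 ^ K) := by
    intro L
    obtain ⟨m, hm, hag⟩ := hp (L + 1)
    refine ⟨m + 1, ?_, fun n hn => ?_⟩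
    · have h1 : m ≡ phase ω x K [MOD 2 ^ K] := by
        show _ % _ = _ % _
        rw [hm, Nat.mod_eq_of_lt (phase_lt hx K)]
      exact h1.add_right 1
    · show x (n + 1) = ω (n + (m + 1))
      rw [hag (n + 1) (by omega)]
      congr 1
      omega
  exact phase_eq hT hEP (InX_shift hx) hs

lemma phase_orbit (m K : ℕ) : phase ω (shift^[m] ω) K = m % 2 ^ K := by
  refine phase_eq hT hEP (InX_orbit ω m) (fun L => ⟨m, rfl, fun n _ => shift_iterate ω m n⟩)

end Core3

section Padic

open Filter PadicInt

variable {ω : ℕ → 𝒜} (hT : IsToeplitz ω)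
  (hEP : EP ω = {p : ℕ | ∃ k : ℕ, 1 ≤ k ∧ p = 2 ^ k})

open Classical in
noncomputable def padic (ω : ℕ → 𝒜) (x : ℕ → 𝒜) : ℤ_[2] :=
  if h : ∃ z : ℤ_[2], Tendsto (fun K => ((phase ω x K : ℤ_[2]))) atTop (nhds z) then
    h.choose else 0

include hT hEP

lemma phase_sub_mem_span {x : ℕ → 𝒜} (hx : InX ω x) {K K' : ℕ} (hKK' : K ≤ K') :
    (phase ω x K' : ℤ_[2]) - (phase ω x K : ℤ_[2]) ∈
      Ideal.span {((2 : ℕ) : ℤ_[2]) ^ K} := by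
  rw [Ideal.mem_span_singleton]
  have hmod : phase ω x K' ≡ phase ω x K [MOD 2 ^ K] := by
    show _ % _ = _ % _
    rw [phase_compat hT hEP hx hKK', Nat.mod_eq_of_lt (phase_lt hx K)]
  have h2 : ((2 : ℤ) ^ K) ∣ ((phase ω x K : ℤ) - (phase ω x K' : ℤ)) := by
    have := hmod.dvd
    exact_mod_cast this
  have h2' : ((2 : ℤ) ^ K) ∣ ((phase ω x K' : ℤ) - (phase ω x K : ℤ)) :=
    (dvd_sub_comm).mp h2
  have h3 := map_dvd (Int.castRingHom ℤ_[2]) h2'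
  simpa using h3

lemma phase_norm_sub_le {x : ℕ → 𝒜} (hx : InX ω x) {K K' : ℕ} (hKK' : K ≤ K') :
    ‖(phase ω x K' : ℤ_[2]) - (phase ω x K : ℤ_[2])‖ ≤ ((2 : ℕ) : ℝ) ^ (-(K : ℤ)) := by
  rw [PadicInt.norm_le_pow_iff_mem_span_pow]
  exact phase_sub_mem_span hT hEP hx hKK'

lemma padic_cauchy {x : ℕ → 𝒜} (hx : InX ω x) :
    CauchySeq (fun K => ((phase ω x K : ℤ_[2]))) := by
  refine cauchySeq_of_le_tendsto_0 (fun K => ((2 : ℕ) : ℝ) ^ (-(K : ℤ))) ?_ ?_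
  · intro n m N hn hm
    rw [dist_eq_norm]
    have e : (phase ω x n : ℤ_[2]) - (phase ω x m : ℤ_[2]) =
        ((phase ω x n : ℤ_[2]) - (phase ω x N : ℤ_[2])) +
        -((phase ω x m : ℤ_[2]) - (phase ω x N : ℤ_[2])) := by ring
    rw [e]
    refine (PadicInt.nonarchimedean _ _).trans (max_le ?_ ?_)
    · exact phase_norm_sub_le hT hEP hx hn
    · rw [norm_neg]
      exact phase_norm_sub_le hT hEP hx hm
  · have he : (fun K : ℕ => ((2 : ℕ) : ℝ) ^ (-(K : ℤ))) = fun K : ℕ => ((1 : ℝ) / 2) ^ K := by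
      funext K
      rw [one_div, inv_pow, ← zpow_natCast, ← zpow_neg]
      norm_num
    rw [he]
    exact tendsto_pow_atTop_nhds_zero_of_lt_one (by norm_num) (by norm_num)

open Classical in
lemma padic_spec {x : ℕ → 𝒜} (hx : InX ω x) :
    Tendsto (fun K => ((phase ω x K : ℤ_[2]))) atTop (nhds (padic ω x)) := by
  have h := cauchySeq_tendsto_of_complete (padic_cauchy hT hEP hx)
  rw [padic, dif_pos h]
  exact h.choose_spec

lemma padic_norm_sub {x : ℕ → 𝒜} (hx : InX ω x) (K : ℕ) :
    ‖padic ω x - (phase ω x K : ℤ_[2])‖ ≤ ((2 : ℕ) : ℝ) ^ (-(K : ℤ)) := by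
  have hcl : IsClosed {z : ℤ_[2] | ‖z - (phase ω x K : ℤ_[2])‖ ≤ ((2 : ℕ) : ℝ) ^ (-(K : ℤ))} :=
    isClosed_le (Continuous.norm (continuous_id.sub continuous_const)) continuous_const
  refine hcl.mem_of_tendsto (padic_spec hT hEP hx) (eventually_atTop.mpr ⟨K, fun K' hK' => ?_⟩)
  exact phase_norm_sub_le hT hEP hx hK'

lemma padic_toZMod {x : ℕ → 𝒜} (hx : InX ω x) (K : ℕ) :
    PadicInt.toZModPow K (padic ω x) = (phase ω x K : ZMod (2 ^ K)) := by
  have h1 : padic ω x - (phase ω x K : ℤ_[2]) ∈ Ideal.span {((2 : ℕ) : ℤ_[2]) ^ K} := by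
    rw [← PadicInt.norm_le_pow_iff_mem_span_pow]
    exact padic_norm_sub hT hEP hx K
  have h2 : PadicInt.toZModPow K (padic ω x - (phase ω x K : ℤ_[2])) = 0 := by
    rw [← RingHom.mem_ker, PadicInt.ker_toZModPow]
    exact h1
  rw [map_sub] at h2
  have h3 := sub_eq_zero.mp h2
  rw [h3, map_natCast]

lemma padic_shift {x : ℕ → 𝒜} (hx : InX ω x) : padic ω (shift x) = padic ω x + 1 := by
  rw [← PadicInt.ext_of_toZModPow]
  intro K
  rw [padic_toZMod hT hEP (InX_shift hx) K, map_add, map_one, padic_toZMod hT hEP hx K,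
    phase_shift hT hEP hx K, ZMod.natCast_mod]
  push_cast
  ring

lemma padic_orbit (m : ℕ) : padic ω (shift^[m] ω) = (m : ℤ_[2]) := by
  rw [← PadicInt.ext_of_toZModPow]
  intro K
  rw [padic_toZMod hT hEP (InX_orbit ω m) K, phase_orbit hT hEP m K, ZMod.natCast_mod,
    map_natCast]

lemma phase_eq_of_padic_eq {x y : ℕ → 𝒜} (hx : InX ω x) (hy : InX ω y)
    (h : padic ω x = padic ω y) (K : ℕ) : phase ω x K = phase ω y K := by
  haveI : NeZero ((2 : ℕ) ^ K) := ⟨(by positivity : (0 : ℕ) < 2 ^ K).ne'⟩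
  have h1 : (phase ω x K : ZMod (2 ^ K)) = (phase ω y K : ZMod (2 ^ K)) := by
    rw [← padic_toZMod hT hEP hx K, ← padic_toZMod hT hEP hy K, h]
  have h2 := congrArg ZMod.val h1
  rwa [ZMod.val_cast_of_lt (phase_lt hx K), ZMod.val_cast_of_lt (phase_lt hy K)] at h2

end Padic

section Topology

open Filter PadicInt

variable [TopologicalSpace 𝒜] [DiscreteTopology 𝒜]
  {ω : ℕ → 𝒜} (hT : IsToeplitz ω)
  (hEP : EP ω = {p : ℕ | ∃ k : ℕ, 1 ≤ k ∧ p = 2 ^ k})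

include hT hEP

lemma continuousOn_padic : ContinuousOn (padic ω) (orbitClosure ω) := by
  intro x hx
  have hxI : InX ω x := mem_orbitClosure_iff.mp hx
  rw [ContinuousWithinAt, Metric.tendsto_nhds]
  intro ε hε
  obtain ⟨K, hK⟩ := PadicInt.exists_pow_neg_lt 2 hε
  set V : Set (ℕ → 𝒜) :=
    (⋃ j ∈ {j | j < 2 ^ K ∧ j ≠ phase ω x K},
      closure {y | InX ω y ∧ phase ω y K = j})ᶜ with hV
  have hVopen : IsOpen V := by
    rw [hV, isOpen_compl_iff]
    refine Set.Finite.isClosed_biUnion ?_ (fun j _ => isClosed_closure)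
    exact (Set.finite_Iio (2 ^ K)).subset (fun j hj => hj.1)
  have hxV : x ∈ V := by
    rw [hV, Set.mem_compl_iff]
    intro hmem
    obtain ⟨j, hj, hcl⟩ := Set.mem_iUnion₂.mp hmem
    have hph : HasPhase ω x K j := by
      intro L
      obtain ⟨y, ⟨hyI, hyph⟩, hag⟩ := mem_closure_window.mp hcl L
      obtain ⟨m, hm, hag2⟩ := phase_hasPhase hyI K L
      exact ⟨m, by rw [hm, hyph], fun n hn => by rw [← hag n hn]; exact hag2 n hn⟩
    exact hj.2 (phase_eq hT hEP hxI hph).symm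
  have hmem : V ∩ orbitClosure ω ∈ nhdsWithin x (orbitClosure ω) :=
    Filter.inter_mem (mem_nhdsWithin_of_mem_nhds (hVopen.mem_nhds hxV)) self_mem_nhdsWithin
  filter_upwards [hmem] with y hy
  obtain ⟨hyV, hyX⟩ := hy
  have hyI : InX ω y := mem_orbitClosure_iff.mp hyX
  have hphase : phase ω y K = phase ω x K := by
    by_contra hne
    exact hyV (Set.mem_biUnion ⟨phase_lt hyI K, hne⟩ (subset_closure ⟨hyI, rfl⟩))
  have h1 : PadicInt.toZModPow K (padic ω y) = PadicInt.toZModPow K (padic ω x) := by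
    rw [padic_toZMod hT hEP hyI, padic_toZMod hT hEP hxI, hphase]
  have h2 : padic ω y - padic ω x ∈ Ideal.span {((2 : ℕ) : ℤ_[2]) ^ K} := by
    rw [← PadicInt.ker_toZModPow, RingHom.mem_ker, map_sub, h1, sub_self]
  rw [dist_eq_norm]
  calc ‖padic ω y - padic ω x‖ ≤ ((2 : ℕ) : ℝ) ^ (-(K : ℤ)) :=
        (PadicInt.norm_le_pow_iff_mem_span_pow _ K).mpr h2
    _ < ε := hK

lemma image_padic [Fintype 𝒜] : padic ω '' orbitClosure ω = Set.univ := by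
  have hcomp : IsCompact (orbitClosure ω) := isClosed_closure.isCompact
  have himg : IsCompact (padic ω '' orbitClosure ω) :=
    hcomp.image_of_continuousOn (continuousOn_padic hT hEP)
  have hclosed : IsClosed (padic ω '' orbitClosure ω) := himg.isClosed
  have hrange : Set.range (Nat.cast : ℕ → ℤ_[2]) ⊆ padic ω '' orbitClosure ω := by
    rintro - ⟨m, rfl⟩
    exact ⟨shift^[m] ω, subset_closure ⟨m, rfl⟩, padic_orbit hT hEP m⟩
  apply Set.eq_univ_of_univ_subset
  calc Set.univ = closure (Set.range (Nat.cast : ℕ → ℤ_[2])) :=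
        (PadicInt.denseRange_natCast (p := 2)).closure_eq.symm
    _ ⊆ closure (padic ω '' orbitClosure ω) := closure_mono hrange
    _ = _ := hclosed.closure_eq

end Topology

end Stmt8Aux


open Stmt8Aux in
/-- For a Toeplitz sequence `ω` with `EP(ω) = {2^k : k ≥ 1}`, the subshift
`σ|_{Z(ω,σ)}` is, up to a countable set, continuously conjugated to the binary
odometer `z ↦ z + 1` on `ℤ₂`. -/
theorem stmt8 {𝒜 : Type*} [Fintype 𝒜] [Nonempty 𝒜] [TopologicalSpace 𝒜] [DiscreteTopology 𝒜]
    (ω : ℕ → 𝒜) (hT : IsToeplitz ω)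
    (hEP : EP ω = {p : ℕ | ∃ k : ℕ, 1 ≤ k ∧ p = 2 ^ k}) :
    ∃ (Ω₁ : Set (ℕ → 𝒜)) (f : (ℕ → 𝒜) → ℤ_[2]),
      Ω₁ ⊆ orbitClosure ω ∧
      Ω₁.Countable ∧
      ContinuousOn f (orbitClosure ω) ∧
      f '' orbitClosure ω = Set.univ ∧
      (∀ x ∈ orbitClosure ω, f (shift x) = f x + 1) ∧
      (∀ x ∈ orbitClosure ω \ Ω₁, shift x ∈ orbitClosure ω \ Ω₁) ∧
      Set.InjOn f (orbitClosure ω \ Ω₁) := by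
  classical
  have hmemX : ∀ x : ℕ → 𝒜, x ∈ orbitClosure ω ↔ InX ω x := fun x => mem_orbitClosure_iff
  set f : (ℕ → 𝒜) → ℤ_[2] := padic ω with hf
  set Ω₁ : Set (ℕ → 𝒜) :=
    {x | x ∈ orbitClosure ω ∧ ∃ m : ℕ, ∀ K, (phase ω x K + m) % 2 ^ K = hole ω K} with hΩ
  have hdet : ∀ x y : ℕ → 𝒜, InX ω x → InX ω y →
      (∀ K, phase ω x K = phase ω y K) → ∀ n K,
      (n + phase ω x K) % 2 ^ K ≠ hole ω K → x n = y n := by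
    intro x y hx hy hph n K hne
    have h1 := determined hT hEP (phase_hasPhase hx K) hne
    have h2 := determined hT hEP (phase_hasPhase hy K)
      (by rw [← hph K]; exact hne)
    rw [h1, h2, hph K]
  have hcount : Ω₁.Countable := by
    have hsub : Ω₁ ⊆ ⋃ m : ℕ,
        {x | InX ω x ∧ ∀ K, (phase ω x K + m) % 2 ^ K = hole ω K} := by
      rintro x ⟨hxX, m, hm⟩
      exact Set.mem_iUnion.mpr ⟨m, (hmemX x).mp hxX, hm⟩
    refine Set.Countable.mono hsub (Set.countable_iUnion fun m => Set.Finite.countable ?_)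
    refine Set.Finite.of_finite_image (f := fun z : ℕ → 𝒜 => z m) (Set.toFinite _) ?_
    rintro x ⟨hxI, hxb⟩ y ⟨hyI, hyb⟩ hxy
    have hph : ∀ K, phase ω x K = phase ω y K := by
      intro K
      have h1 : phase ω x K ≡ phase ω y K [MOD 2 ^ K] :=
        Nat.ModEq.add_right_cancel' m (((hxb K).trans (hyb K).symm : _ % _ = _ % _))
      have h2 : _ % _ = _ % _ := h1
      rwa [Nat.mod_eq_of_lt (phase_lt hxI K), Nat.mod_eq_of_lt (phase_lt hyI K)] at h2
    funext n
    by_cases hnm : n = m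
    · subst hnm; exact hxy
    · set K := n + m + 1 with hKdef
      have hnK : n < 2 ^ K :=
        lt_of_lt_of_le (Nat.lt_two_pow_self (n := n)) (Nat.pow_le_pow_right (by norm_num) (by omega))
      have hmK : m < 2 ^ K :=
        lt_of_lt_of_le (Nat.lt_two_pow_self (n := m)) (Nat.pow_le_pow_right (by norm_num) (by omega))
      have hne : (n + phase ω x K) % 2 ^ K ≠ hole ω K := by
        intro heq
        have h3 : (m + phase ω x K) % 2 ^ K = hole ω K := by
          rw [add_comm]; exact hxb K
        have h4 : n + phase ω x K ≡ m + phase ω x K [MOD 2 ^ K] := by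
          show _ % _ = _ % _
          rw [heq, h3]
        have h5 : n ≡ m [MOD 2 ^ K] := Nat.ModEq.add_right_cancel' _ h4
        have h6 : _ % _ = _ % _ := h5
        rw [Nat.mod_eq_of_lt hnK, Nat.mod_eq_of_lt hmK] at h6
        exact hnm h6
      exact hdet x y hxI hyI hph n K hne
  refine ⟨Ω₁, f, fun x hx => hx.1, hcount, continuousOn_padic hT hEP,
    image_padic hT hEP, ?_, ?_, ?_⟩
  · intro x hxX
    exact padic_shift hT hEP ((hmemX x).mp hxX)
  · rintro x ⟨hxX, hxΩ⟩
    have hxI := (hmemX x).mp hxX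
    refine ⟨(hmemX _).mpr (InX_shift hxI), ?_⟩
    rintro ⟨-, m, hbad⟩
    refine hxΩ ⟨hxX, m + 1, fun K => ?_⟩
    have hb := hbad K
    rw [phase_shift hT hEP hxI K, Nat.mod_add_mod] at hb
    rw [← hb]
    congr 1
    omega
  · rintro x ⟨hxX, hxΩ⟩ y ⟨hyX, hyΩ⟩ hfxy
    have hxI := (hmemX x).mp hxX
    have hyI := (hmemX y).mp hyX
    have hph := phase_eq_of_padic_eq hT hEP hxI hyI hfxy
    funext n
    have hne : ∃ K, (n + phase ω x K) % 2 ^ K ≠ hole ω K := by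
      by_contra h
      push_neg at h
      exact hxΩ ⟨hxX, n, fun K => by rw [add_comm]; exact h K⟩
    obtain ⟨K, hK⟩ := hne
    exact hdet x y hxI hyI hph n K hK
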